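/- arXiv:2303.11217 — 2 statements merged into one kernel-verified Lean document; each statement's English description precedes it below -/
import Mathlib

section
/- Let A ∈ ℝ^{m×n}, σ, γ > 0, and let λ_min ≥ 0 be the smallest eigenvalue of AᵀA. Then the linear map v ↦ (AᵀA + (σ²/γ²)I)⁻¹ ((σ²/γ²) v) has operator norm at most σ²/(γ²λ_min + σ²). Consequently, if D : ℝⁿ → ℝⁿ is L-Lipschitz, then the map T(x) = (AᵀA + (σ²/γ²)I)⁻¹(Aᵀy + (σ²/γ²)D(x)) is (σ²L/(γ²λ_min + σ²))-Lipschitz. -/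
open Matrix

def toE {k : ℕ} (v : Fin k → ℝ) : EuclideanSpace ℝ (Fin k) := WithLp.toLp 2 v
def ofE {k : ℕ} (v : EuclideanSpace ℝ (Fin k)) : Fin k → ℝ := v

lemma inner_toE {k : ℕ} (a b : Fin k → ℝ) :
    (inner ℝ (toE a) (toE b) : ℝ) = a ⬝ᵥ b := by
  simp [toE, PiLp.inner_apply, dotProduct, RCLike.inner_apply, mul_comm]

/-- The linear map `v ↦ (AᵀA + (σ²/γ²)I)⁻¹((σ²/γ²)v)` has operator norm at most
`σ²/(γ²λ_min + σ²)` (where `λ_min` is the smallest eigenvalue of `AᵀA`); consequently, if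
`D` is `L`-Lipschitz then `T(x) = (AᵀA + (σ²/γ²)I)⁻¹(Aᵀy + (σ²/γ²)D(x))` is
`σ²L/(γ²λ_min + σ²)`-Lipschitz. -/
theorem stmt_1 (m n : ℕ) [NeZero n] (A : Matrix (Fin m) (Fin n) ℝ)
    (y : EuclideanSpace ℝ (Fin m)) (σ γ L lammin : ℝ) (hσ : 0 < σ) (hγ : 0 < γ) (hL : 0 ≤ L)
    (hA : (Aᵀ * A : Matrix (Fin n) (Fin n) ℝ).IsHermitian)
    (hlam : lammin = ⨅ i, hA.eigenvalues i)
    (D : EuclideanSpace ℝ (Fin n) → EuclideanSpace ℝ (Fin n))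
    (hD : LipschitzWith (Real.toNNReal L) D) :
    (∀ v : EuclideanSpace ℝ (Fin n),
        ‖toE (((Aᵀ * A + (σ ^ 2 / γ ^ 2) • (1 : Matrix (Fin n) (Fin n) ℝ))⁻¹).mulVec
            ((σ ^ 2 / γ ^ 2) • ofE v))‖ ≤ (σ ^ 2 / (γ ^ 2 * lammin + σ ^ 2)) * ‖v‖) ∧
    LipschitzWith (Real.toNNReal (σ ^ 2 * L / (γ ^ 2 * lammin + σ ^ 2)))
      (fun x : EuclideanSpace ℝ (Fin n) =>
        toE (((Aᵀ * A + (σ ^ 2 / γ ^ 2) • (1 : Matrix (Fin n) (Fin n) ℝ))⁻¹).mulVec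
          (Aᵀ.mulVec y + (σ ^ 2 / γ ^ 2) • ofE (D x)))) := by
  set c : ℝ := σ ^ 2 / γ ^ 2 with hc
  have hc0 : 0 < c := by positivity
  set B : Matrix (Fin n) (Fin n) ℝ := Aᵀ * A + c • 1 with hBdef
  have hAconj : Aᴴ = Aᵀ := conjTranspose_eq_transpose_of_trivial A
  have hpsd : (Aᵀ * A).PosSemidef := by
    have := Matrix.posSemidef_conjTranspose_mul_self A
    rwa [hAconj] at this
  have hone : ((c • 1 : Matrix (Fin n) (Fin n) ℝ)).PosDef := by
    rw [smul_one_eq_diagonal]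
    exact Matrix.posDef_diagonal_iff.mpr fun i => hc0
  have hBpd : B.PosDef := Matrix.PosDef.posSemidef_add hpsd hone
  have hdet : IsUnit B.det := isUnit_iff_ne_zero.mpr hBpd.det_pos.ne'
  have hBB : B * B⁻¹ = 1 := mul_nonsing_inv B hdet
  have hBT : Bᵀ = B := by
    have := hBpd.1
    rwa [IsHermitian, conjTranspose_eq_transpose_of_trivial] at this
  set u := hA.eigenvectorBasis with hu
  set lam := hA.eigenvalues with hlamdef
  have hlamnn : ∀ i, 0 ≤ lam i := fun i => hpsd.eigenvalues_nonneg i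
  have hl0 : 0 ≤ lammin := by
    rw [hlam]; exact le_ciInf hlamnn
  have hlle : ∀ i, lammin ≤ lam i := by
    intro i; rw [hlam]
    exact ciInf_le (Finite.bddBelow_range _) i
  have hden0 : 0 < lammin + c := add_pos_of_nonneg_of_pos hl0 hc0
  set r : ℝ := c / (lammin + c) with hr
  have hr0 : 0 ≤ r := by positivity
  have hBu : ∀ i, B *ᵥ ofE (u i) = (lam i + c) • ofE (u i) := by
    intro i
    have h0 : (Aᵀ * A) *ᵥ ofE (u i) = lam i • ofE (u i) := hA.mulVec_eigenvectorBasis i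
    rw [hBdef, add_mulVec, smul_mulVec, one_mulVec, h0, add_smul]
  have hsym : ∀ a b : Fin n → ℝ, (B *ᵥ a) ⬝ᵥ b = a ⬝ᵥ (B *ᵥ b) := by
    intro a b
    rw [Matrix.dotProduct_mulVec a B b, ← Matrix.mulVec_transpose, hBT]
  have hnorm : ∀ z : EuclideanSpace ℝ (Fin n), ‖z‖ = Real.sqrt (∑ i, (u.repr z i) ^ 2) := by
    intro z
    rw [← (u.repr.norm_map z), EuclideanSpace.norm_eq]
    simp [Real.norm_eq_abs, sq_abs]
  -- key inequality
  have key : ∀ v : EuclideanSpace ℝ (Fin n),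
      ‖toE ((B⁻¹).mulVec (c • ofE v))‖ ≤ r * ‖v‖ := by
    intro v
    set w : Fin n → ℝ := (B⁻¹).mulVec (c • ofE v) with hwdef
    have hw : B *ᵥ w = c • ofE v := by
      rw [hwdef, mulVec_mulVec, hBB, one_mulVec]
    have hcoeff : ∀ i, u.repr (toE w) i = (c / (lam i + c)) * u.repr v i := by
      intro i
      have hpos : 0 < lam i + c := add_pos_of_nonneg_of_pos (hlamnn i) hc0
      have h1 : (lam i + c) * u.repr (toE w) i = c * u.repr v i := by
        rw [OrthonormalBasis.repr_apply_apply, OrthonormalBasis.repr_apply_apply]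
        have e1 : (inner ℝ (u i) (toE w) : ℝ) = ofE (u i) ⬝ᵥ w := inner_toE (ofE (u i)) w
        have e2 : (inner ℝ (u i) v : ℝ) = ofE (u i) ⬝ᵥ ofE v := inner_toE (ofE (u i)) (ofE v)
        rw [e1, e2]
        calc (lam i + c) * (ofE (u i) ⬝ᵥ w)
            = ((lam i + c) • ofE (u i)) ⬝ᵥ w := by rw [smul_dotProduct]; rfl
          _ = (B *ᵥ ofE (u i)) ⬝ᵥ w := by rw [hBu i]
          _ = ofE (u i) ⬝ᵥ (B *ᵥ w) := hsym _ _
          _ = ofE (u i) ⬝ᵥ (c • ofE v) := by rw [hw]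
          _ = c * (ofE (u i) ⬝ᵥ ofE v) := by rw [dotProduct_smul]; rfl
      field_simp at h1 ⊢
      linarith [h1]
    rw [hnorm (toE w), hnorm v]
    have hsum : ∑ i, (u.repr (toE w) i) ^ 2 ≤ r ^ 2 * ∑ i, (u.repr v i) ^ 2 := by
      rw [Finset.mul_sum]
      apply Finset.sum_le_sum
      intro i _
      rw [hcoeff i, mul_pow]
      have hpos : 0 < lam i + c := add_pos_of_nonneg_of_pos (hlamnn i) hc0
      have hdiv : c / (lam i + c) ≤ r := by
        rw [hr]; gcongr; exact hlle i
      have hdivnn : 0 ≤ c / (lam i + c) := by positivity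
      exact mul_le_mul_of_nonneg_right (pow_le_pow_left₀ hdivnn hdiv 2) (sq_nonneg _)
    calc Real.sqrt (∑ i, (u.repr (toE w) i) ^ 2)
        ≤ Real.sqrt (r ^ 2 * ∑ i, (u.repr v i) ^ 2) := Real.sqrt_le_sqrt hsum
      _ = r * Real.sqrt (∑ i, (u.repr v i) ^ 2) := by
          rw [Real.sqrt_mul (sq_nonneg r), Real.sqrt_sq hr0]
  have hγ2 : (γ : ℝ) ^ 2 ≠ 0 := by positivity
  have hratio : r = σ ^ 2 / (γ ^ 2 * lammin + σ ^ 2) := by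
    rw [hr, hc]
    rw [div_eq_div_iff hden0.ne' (by positivity : (0:ℝ) < γ ^ 2 * lammin + σ ^ 2).ne']
    have hcan : γ ^ 2 * γ⁻¹ ^ 2 = 1 := by
      rw [← mul_pow, mul_inv_cancel₀ hγ.ne', one_pow]
    field_simp [hγ.ne']
    linear_combination (-(σ ^ 2)) * hcan
  constructor
  · intro v
    have := key v
    rwa [hratio] at this
  · have hK : 0 ≤ σ ^ 2 * L / (γ ^ 2 * lammin + σ ^ 2) := by
      have : (0:ℝ) < γ ^ 2 * lammin + σ ^ 2 := by positivity
      positivity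
    apply LipschitzWith.of_dist_le_mul
    intro x x'
    rw [Real.coe_toNNReal _ hK, dist_eq_norm, dist_eq_norm]
    have hdiff : (toE ((B⁻¹).mulVec (Aᵀ.mulVec y + c • ofE (D x)))
        - toE ((B⁻¹).mulVec (Aᵀ.mulVec y + c • ofE (D x'))) : EuclideanSpace ℝ (Fin n))
        = toE ((B⁻¹).mulVec (c • ofE (D x - D x'))) := by
      have hsub : ∀ a b : Fin n → ℝ, toE a - toE b = toE (a - b) := fun a b => rfl
      rw [hsub]
      rw [← mulVec_sub]
      rw [add_sub_add_left_eq_sub, ← smul_sub]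
      rfl
    rw [hdiff]
    calc ‖toE ((B⁻¹).mulVec (c • ofE (D x - D x')))‖ ≤ r * ‖D x - D x'‖ := key _
      _ ≤ r * (L * ‖x - x'‖) := by
          apply mul_le_mul_of_nonneg_left _ hr0
          have := hD.dist_le_mul x x'
          rwa [Real.coe_toNNReal _ hL, dist_eq_norm, dist_eq_norm] at this
      _ = σ ^ 2 * L / (γ ^ 2 * lammin + σ ^ 2) * ‖x - x'‖ := by
          rw [hratio]; ring
end

section
/- Let λ_min > 0 be the smallest eigenvalue of AᵀA, σ, γ > 0, and D : ℝⁿ → ℝⁿ be L-Lipschitz with σ²L/(γ²λ_min + σ²) < 1. Then the map T(x) = (AᵀA + (σ²/γ²)I)⁻¹(Aᵀy + (σ²/γ²)D(x)) has a unique fixed point x*, and for any starting point x₀, the iterates x_{k+1} = T(x_k) converge to x*. -/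
open Matrix
open scoped RealInnerProductSpace

lemma toE_add {k : ℕ} (a b : Fin k → ℝ) : toE (a + b) = toE a + toE b := rfl

lemma quad_lower (n : ℕ) (M : Matrix (Fin n) (Fin n) ℝ) (hM : M.IsHermitian) (lam : ℝ)
    (hlam : ∀ i, lam ≤ hM.eigenvalues i) (u : EuclideanSpace ℝ (Fin n)) :
    lam * ‖u‖ ^ 2 ≤ ⟪u, Matrix.toEuclideanLin M u⟫ := by
  set B := hM.eigenvectorBasis with hB
  have key : ∀ i, B.repr (Matrix.toEuclideanLin M u) i = hM.eigenvalues i * B.repr u i := by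
    intro i
    rw [B.repr_apply_apply, B.repr_apply_apply]
    have hsym := (Matrix.isHermitian_iff_isSymmetric.1 hM)
    rw [← hsym (B i) u]
    have h2 : Matrix.toEuclideanLin M (B i) = hM.eigenvalues i • B i := by
      have := hM.mulVec_eigenvectorBasis i
      rw [Matrix.toEuclideanLin_apply]
      exact congrArg (WithLp.equiv 2 _).symm this
    rw [h2, inner_smul_left]
    simp
  have hinner : ⟪u, Matrix.toEuclideanLin M u⟫ =
      ∑ i, hM.eigenvalues i * (B.repr u i) ^ 2 := by
    rw [← B.repr.inner_map_map u (Matrix.toEuclideanLin M u), PiLp.inner_apply]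
    refine Finset.sum_congr rfl fun i _ => ?_
    rw [key i]; simp [RCLike.inner_apply]; ring
  have hnorm : ‖u‖ ^ 2 = ∑ i, (B.repr u i) ^ 2 := by
    rw [← B.repr.norm_map u, EuclideanSpace.norm_eq, Real.sq_sqrt (by positivity)]
    simp [sq_abs]
  rw [hinner, hnorm, Finset.mul_sum]
  refine Finset.sum_le_sum fun i _ => ?_
  nlinarith [sq_nonneg (B.repr u i), hlam i]

/-- If `λ_min > 0` is the smallest eigenvalue of `AᵀA` and `σ²L/(γ²λ_min + σ²) < 1` with `D`
`L`-Lipschitz, then `T(x) = (AᵀA + (σ²/γ²)I)⁻¹(Aᵀy + (σ²/γ²)D(x))` has a unique fixed point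
`x*` and the Picard iterates from any starting point converge to `x*`. -/
theorem stmt_3 (m n : ℕ) [NeZero n] (A : Matrix (Fin m) (Fin n) ℝ)
    (y : EuclideanSpace ℝ (Fin m)) (σ γ L lammin : ℝ) (hσ : 0 < σ) (hγ : 0 < γ) (hL : 0 ≤ L)
    (hA : (Aᵀ * A : Matrix (Fin n) (Fin n) ℝ).IsHermitian)
    (hlam : lammin = ⨅ i, hA.eigenvalues i) (hlampos : 0 < lammin)
    (D : EuclideanSpace ℝ (Fin n) → EuclideanSpace ℝ (Fin n))
    (hD : LipschitzWith (Real.toNNReal L) D)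
    (hcontr : σ ^ 2 * L / (γ ^ 2 * lammin + σ ^ 2) < 1)
    (T : EuclideanSpace ℝ (Fin n) → EuclideanSpace ℝ (Fin n))
    (hT : ∀ x, T x = toE (((Aᵀ * A + (σ ^ 2 / γ ^ 2) • (1 : Matrix (Fin n) (Fin n) ℝ))⁻¹).mulVec
      (Aᵀ.mulVec y + (σ ^ 2 / γ ^ 2) • ofE (D x)))) :
    ∃ xstar : EuclideanSpace ℝ (Fin n), T xstar = xstar ∧
      (∀ x, T x = x → x = xstar) ∧
      (∀ x0 : EuclideanSpace ℝ (Fin n),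
        Filter.Tendsto (fun k => T^[k] x0) Filter.atTop (nhds xstar)) := by
  set c : ℝ := σ ^ 2 / γ ^ 2 with hc
  have hcpos : 0 < c := by positivity
  set M : Matrix (Fin n) (Fin n) ℝ := Aᵀ * A + c • 1 with hMdef
  have hlam' : ∀ i, lammin ≤ hA.eigenvalues i := by
    intro i
    rw [hlam]
    exact ciInf_le (Set.Finite.bddBelow (Set.finite_range _)) i
  have hMh : M.IsHermitian := by
    apply hA.add
    show (c • (1 : Matrix (Fin n) (Fin n) ℝ))ᴴ = _
    rw [Matrix.conjTranspose_smul, Matrix.conjTranspose_one]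
    simp
  have hquad : ∀ u : EuclideanSpace ℝ (Fin n),
      (lammin + c) * ‖u‖ ^ 2 ≤ ⟪u, Matrix.toEuclideanLin M u⟫ := by
    intro u
    have h1 := quad_lower n (Aᵀ * A) hA lammin hlam' u
    have h2 : Matrix.toEuclideanLin M u
        = Matrix.toEuclideanLin (Aᵀ * A) u + c • u := by
      rw [hMdef, map_add, LinearMap.add_apply]
      congr 1
      rw [LinearEquiv.map_smul, LinearMap.smul_apply]
      congr 1
      rw [Matrix.toEuclideanLin_apply, Matrix.one_mulVec]
    rw [h2, inner_add_right, inner_smul_right, real_inner_self_eq_norm_sq]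
    linarith
  have hlc : 0 < lammin + c := by linarith
  have hMpd : M.PosDef := by
    refine Matrix.posDef_iff_dotProduct_mulVec.mpr ⟨hMh, fun x hx => ?_⟩
    have h := hquad (toE x)
    have hxpos : (0:ℝ) < ‖toE x‖ ^ 2 := by
      have hne : toE x ≠ 0 := fun h => hx (congrArg ofE h)
      have := norm_pos_iff.mpr hne
      positivity
    have hdp : (star x) ⬝ᵥ (M *ᵥ x) = ⟪toE x, Matrix.toEuclideanLin M (toE x)⟫ := by
      rw [Matrix.toEuclideanLin_apply, PiLp.inner_apply]
      simp [dotProduct, RCLike.inner_apply, toE]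
      exact Finset.sum_congr rfl fun i _ => mul_comm _ _
    rw [hdp]
    nlinarith
  have hdet : IsUnit M.det := isUnit_iff_ne_zero.mpr (ne_of_gt hMpd.det_pos)
  have hMinv : M * M⁻¹ = 1 := Matrix.mul_nonsing_inv M hdet
  have hinvbound : ∀ v : Fin n → ℝ,
      ‖toE (M⁻¹ *ᵥ v)‖ ≤ (1 / (lammin + c)) * ‖toE v‖ := by
    intro v
    set u : EuclideanSpace ℝ (Fin n) := toE (M⁻¹ *ᵥ v) with hu
    have hMu : Matrix.toEuclideanLin M u = toE v := by
      rw [Matrix.toEuclideanLin_apply]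
      show toE (M *ᵥ (M⁻¹ *ᵥ v)) = toE v
      rw [Matrix.mulVec_mulVec, hMinv, Matrix.one_mulVec]
    have h1 := hquad u
    rw [hMu] at h1
    have h2 : ⟪u, toE v⟫ ≤ ‖u‖ * ‖toE v‖ := real_inner_le_norm u (toE v)
    rcases eq_or_lt_of_le (norm_nonneg u) with h | h
    · rw [← h]; positivity
    · rw [div_mul_eq_mul_div, le_div_iff₀ hlc]
      nlinarith
  set K : ℝ := c * L / (lammin + c) with hK
  have hKnonneg : 0 ≤ K := by positivity
  have hKeq : K = σ ^ 2 * L / (γ ^ 2 * lammin + σ ^ 2) := by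
    rw [hK, hc, div_eq_div_iff (by positivity) (by positivity)]
    field_simp
  have hK1 : K < 1 := by rw [hKeq]; exact hcontr
  have hlip : LipschitzWith (Real.toNNReal K) T := by
    apply LipschitzWith.of_dist_le_mul
    intro x x'
    rw [dist_eq_norm, dist_eq_norm]
    have hdiff : T x - T x' = toE (M⁻¹ *ᵥ (c • (ofE (D x) - ofE (D x')))) := by
      rw [hT x, hT x']
      have : (Aᵀ *ᵥ ofE y + c • ofE (D x))
          = (Aᵀ *ᵥ ofE y + c • ofE (D x')) + (c • (ofE (D x) - ofE (D x'))) := by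
        module
      rw [show Aᵀ.mulVec y = Aᵀ *ᵥ ofE y from rfl] at *
      rw [this, Matrix.mulVec_add, toE_add, add_sub_cancel_left]
    rw [hdiff]
    calc ‖toE (M⁻¹ *ᵥ (c • (ofE (D x) - ofE (D x'))))‖
        ≤ (1 / (lammin + c)) * ‖toE (c • (ofE (D x) - ofE (D x')))‖ := hinvbound _
      _ = (1 / (lammin + c)) * (c * ‖D x - D x'‖) := by
          congr 1
          show ‖c • (D x - D x')‖ = c * ‖D x - D x'‖
          rw [norm_smul, Real.norm_of_nonneg hcpos.le]
      _ ≤ (1 / (lammin + c)) * (c * (L * ‖x - x'‖)) := by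
          have hd := hD.dist_le_mul x x'
          rw [dist_eq_norm, dist_eq_norm, Real.coe_toNNReal _ hL] at hd
          gcongr
      _ = Real.toNNReal K * ‖x - x'‖ := by
          rw [Real.coe_toNNReal _ hKnonneg, hK]
          ring
  have hC : ContractingWith (Real.toNNReal K) T := by
    constructor
    · exact_mod_cast Real.toNNReal_lt_one.mpr hK1
    · exact hlip
  refine ⟨hC.fixedPoint T, hC.fixedPoint_isFixedPt, fun x hx => hC.fixedPoint_unique hx,
    fun x0 => hC.tendsto_iterate_fixedPoint x0⟩
end
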